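/- Let k be a field, L_1, ..., L_n finite field extensions of k, and (V_i, m_i) discrete valuation rings with residue field V_i/m_i ≅ L_i. Let S be the subring of the product of the V_i consisting of tuples (v_1, ..., v_n) such that there exists α in k with v_i ≡ α mod m_i for all i. Then S is a seminormal ring. -/

import Mathlib

/-- The integral closure of an ideal `I`: elements `x` satisfying a monic equation
`x^d + a 1 * x^(d-1) + ... + a d = 0` with `a j ∈ I^j` for `1 ≤ j ≤ d`. -/
def Ideal.intClosure {R : Type*} [CommRing R] (I : Ideal R) : Set R :=
  {x | ∃ (d : ℕ) (a : ℕ → R), 0 < d ∧ (∀ j, 1 ≤ j → j ≤ d → a j ∈ I ^ j) ∧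
    x ^ d + ∑ j ∈ Finset.Icc 1 d, a j * x ^ (d - j) = 0}

/-- The inner integral closure of an ideal `I`:
`{ r | ∃ n ≥ 1, r ^ n ∈ integral closure of I ^ (n+1) }`. -/
def Ideal.innerIntClosure {R : Type*} [CommRing R] (I : Ideal R) : Set R :=
  {r | ∃ n : ℕ, 1 ≤ n ∧ r ^ n ∈ (I ^ (n + 1)).intClosure}

/-- A ring is seminormal if it is reduced and every element `x` of its total quotient ring
with `x^2, x^3` in (the image of) the ring lies in the ring. -/
def IsSeminormalRing (R : Type*) [CommRing R] : Prop :=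
  IsReduced R ∧ ∀ x : FractionRing R,
    x ^ 2 ∈ (algebraMap R (FractionRing R)).range →
    x ^ 3 ∈ (algebraMap R (FractionRing R)).range →
    x ∈ (algebraMap R (FractionRing R)).range

set_option maxHeartbeats 1000000 in
set_option synthInstance.maxHeartbeats 200000 in
/-- Traverso glueing: the subring of a product of DVRs consisting of tuples congruent
to a common element of `k` modulo the maximal ideals is seminormal. -/
theorem stmt7 {k : Type*} [Field k] {n : ℕ} (L : Fin n → Type*) [∀ i, Field (L i)]
    [∀ i, Algebra k (L i)] [∀ i, FiniteDimensional k (L i)]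
    (V : Fin n → Type*) [∀ i, CommRing (V i)] [∀ i, IsDomain (V i)]
    [∀ i, IsDiscreteValuationRing (V i)]
    (e : ∀ i, IsLocalRing.ResidueField (V i) ≃+* L i)
    (S : Subring (Π i, V i))
    (hS : ∀ v : Π i, V i, v ∈ S ↔ ∃ α : k, ∀ i,
      e i (IsLocalRing.residue (V i) (v i)) = algebraMap k (L i) α) :
    IsSeminormalRing S := by
  unfold IsSeminormalRing
  classical
  constructor
  · exact isReduced_of_injective S.subtype S.subtype_injective
  intro x hx2 hx3
  -- the embedding of the product into the product of fraction fields
  set ι : (Π i, V i) →+* (Π i, FractionRing (V i)) :=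
    Pi.ringHom fun i => (algebraMap (V i) (FractionRing (V i))).comp (Pi.evalRingHom V i)
    with hιdef
  have hιapp : ∀ (v : Π i, V i) (i), ι v i = algebraMap (V i) (FractionRing (V i)) (v i) :=
    fun v i => rfl
  have hιinj : Function.Injective ι := by
    intro a b hab
    funext i
    exact IsFractionRing.injective (V i) (FractionRing (V i)) (congrFun hab i)
  set ψ : S →+* (Π i, FractionRing (V i)) := ι.comp S.subtype with hψdef
  have hψinj : Function.Injective ψ := hιinj.comp S.subtype_injective
  -- nonzerodivisors of S have all coordinates nonzero
  have hnzd : ∀ t ∈ nonZeroDivisors S, ∀ i, (t : Π i, V i) i ≠ 0 := by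
    intro t ht i hti
    obtain ⟨ϖ, hϖ⟩ := IsDiscreteValuationRing.exists_irreducible (V i)
    set u : Π j, V j := Pi.single i ϖ with hu'
    have hu : u ∈ S := by
      rw [hS]
      refine ⟨0, fun j => ?_⟩
      rcases eq_or_ne j i with rfl | hji
      · have : IsLocalRing.residue (V j) ϖ = 0 := by
          exact Ideal.Quotient.eq_zero_iff_mem.mpr hϖ.not_isUnit
        simp [hu', Pi.single_eq_same, this]
      · simp [hu', Pi.single_eq_of_ne hji]
    have hzero : (⟨u, hu⟩ : S) * t = 0 := by
      ext j
      show u j * (t : Π i, V i) j = 0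
      rcases eq_or_ne j i with rfl | hji
      · rw [hu', Pi.single_eq_same, hti, mul_zero]
      · rw [hu', Pi.single_eq_of_ne hji, zero_mul]
    have := mem_nonZeroDivisors_iff_right.mp ht _ hzero
    have : u i = 0 := by
      have := congrArg Subtype.val this
      exact congrFun this i
    rw [hu', Pi.single_eq_same] at this
    exact hϖ.ne_zero this
  -- nonzerodivisors become units
  have hunit : ∀ t : nonZeroDivisors S, IsUnit (ψ t) := by
    intro t
    refine IsUnit.of_mul_eq_one (fun i => (ψ t i)⁻¹) ?_
    funext i
    show ψ t i * (ψ t i)⁻¹ = 1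
    refine mul_inv_cancel₀ ?_
    have : (t : S).val i ≠ 0 := hnzd t t.2 i
    show algebraMap (V i) (FractionRing (V i)) ((t : S).val i) ≠ 0
    simpa using fun h => this (IsFractionRing.injective (V i) (FractionRing (V i)) (by simpa using h))
  set φ : FractionRing S →+* (Π i, FractionRing (V i)) :=
    IsLocalization.lift (M := nonZeroDivisors S) (g := ψ) hunit with hφdef
  have hφalg : ∀ s : S, φ (algebraMap S (FractionRing S) s) = ψ s :=
    fun s => IsLocalization.lift_eq (g := ψ) hunit s
  have hφinj : Function.Injective φ := by
    rw [injective_iff_map_eq_zero]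
    intro a ha
    obtain ⟨⟨s, t⟩, rfl⟩ := IsLocalization.mk'_surjective (nonZeroDivisors S) a
    rw [IsLocalization.lift_mk'_spec] at ha
    have hs : s = 0 := hψinj (by simpa using ha)
    rw [hs]; exact IsLocalization.mk'_zero t
  -- components of φ x are integral over V i
  obtain ⟨s2, hs2⟩ := hx2
  obtain ⟨s3, hs3⟩ := hx3
  have h2 : ∀ i, (φ x i) ^ 2 = algebraMap (V i) (FractionRing (V i)) ((s2 : Π i, V i) i) := by
    intro i
    have := congrArg φ hs2
    rw [hφalg, map_pow] at this
    have := congrFun this.symm i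
    simp at this; exact this
  have h3 : ∀ i, (φ x i) ^ 3 = algebraMap (V i) (FractionRing (V i)) ((s3 : Π i, V i) i) := by
    intro i
    have := congrArg φ hs3
    rw [hφalg, map_pow] at this
    have := congrFun this.symm i
    simp at this; exact this
  have hint : ∀ i, ∃ y : V i, algebraMap (V i) (FractionRing (V i)) y = φ x i := by
    intro i
    refine IsIntegrallyClosed.isIntegral_iff.mp ?_
    refine IsIntegral.of_pow (n := 2) (by norm_num) ?_
    rw [h2 i]
    exact isIntegral_algebraMap
  choose f hf using hint
  have hf2 : ∀ i, f i ^ 2 = (s2 : Π i, V i) i := by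
    intro i
    apply IsFractionRing.injective (V i) (FractionRing (V i))
    rw [map_pow, hf i, h2 i]
  have hf3 : ∀ i, f i ^ 3 = (s3 : Π i, V i) i := by
    intro i
    apply IsFractionRing.injective (V i) (FractionRing (V i))
    rw [map_pow, hf i, h3 i]
  -- f lies in S
  obtain ⟨α, hα⟩ := (hS _).mp s2.2
  obtain ⟨β, hβ⟩ := (hS _).mp s3.2
  have hr2 : ∀ i, (e i (IsLocalRing.residue (V i) (f i))) ^ 2 = algebraMap k (L i) α := by
    intro i
    rw [← map_pow, ← map_pow, hf2 i]
    exact hα i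
  have hr3 : ∀ i, (e i (IsLocalRing.residue (V i) (f i))) ^ 3 = algebraMap k (L i) β := by
    intro i
    rw [← map_pow, ← map_pow, hf3 i]
    exact hβ i
  have hfS : f ∈ S := by
    rw [hS]
    rcases eq_or_ne α 0 with hα0 | hα0
    · refine ⟨0, fun i => ?_⟩
      have : (e i (IsLocalRing.residue (V i) (f i))) ^ 2 = 0 := by
        rw [hr2 i, hα0, map_zero]
      rw [pow_eq_zero_iff (by norm_num : (2:ℕ) ≠ 0)] at this
      rw [this, map_zero]
    · refine ⟨β / α, fun i => ?_⟩
      set r := e i (IsLocalRing.residue (V i) (f i)) with hrdef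
      have halgα : algebraMap k (L i) α ≠ 0 := by
        simpa using fun h => hα0 ((algebraMap k (L i)).injective h)
      have hr : r * algebraMap k (L i) α = algebraMap k (L i) β := by
        rw [← hr2 i, ← hr3 i]; ring
      rw [map_div₀, eq_div_iff halgα]
      exact hr
  -- conclude
  refine ⟨⟨f, hfS⟩, hφinj ?_⟩
  rw [hφalg]
  funext i
  exact hf i
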